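/- Let 0 → A → B → C → 0 be a short exact sequence of finitely generated abelian groups. Writing G∧ = lim_n G/nG for the profinite completion of an abelian group G, the natural map G → G∧ is injective for G finitely generated, and the induced sequence of cokernels 0 → A∧/A → B∧/B → C∧/C → 0 is exact. -/

import Mathlib

universe u

/-! For an abelian group `G`, the profinite completion `G∧ = lim_n G/nG` is realized as
the subgroup of `∏ n : ℕ+, G/nG` of compatible families, where the transition maps
`G/nG → G/mG` for `m ∣ n` are induced by the identity of `G`. -/

/-- The subgroup `nG = {n • g : g ∈ G}` of an abelian group `G`. -/
def nMul (G : Type*) [AddCommGroup G] (n : ℕ) : AddSubgroup G where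
  carrier := Set.range fun x : G => n • x
  add_mem' := by rintro _ _ ⟨x, rfl⟩ ⟨y, rfl⟩; exact ⟨x + y, smul_add n x y⟩
  zero_mem' := ⟨0, smul_zero n⟩
  neg_mem' := by rintro _ ⟨x, rfl⟩; exact ⟨-x, smul_neg n x⟩

theorem nMul_le (G : Type*) [AddCommGroup G] {m n : ℕ} (h : m ∣ n) :
    nMul G n ≤ nMul G m := by
  rintro _ ⟨x, rfl⟩
  obtain ⟨c, rfl⟩ := h
  exact ⟨c • x, smul_smul m c x⟩

/-- The transition map `G/nG → G/mG` for `m ∣ n`, induced by the identity of `G`. -/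
def transMap (G : Type*) [AddCommGroup G] (m n : ℕ) (h : m ∣ n) :
    G ⧸ nMul G n →+ G ⧸ nMul G m :=
  QuotientAddGroup.map _ _ (AddMonoidHom.id G) (nMul_le G h)

section Aux
variable {G : Type*} [AddCommGroup G]

theorem mem_nMul {x : G} {n : ℕ} : x ∈ nMul G n ↔ ∃ y, n • y = x := Iff.rfl

theorem transMap_mk (m n : ℕ) (h : m ∣ n) (x : G) :
    transMap G m n h (QuotientAddGroup.mk x) = QuotientAddGroup.mk x := rfl

theorem transMap_self (n : ℕ) (h : n ∣ n) (x : G ⧸ nMul G n) : transMap G n n h x = x :=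
  QuotientAddGroup.induction_on x fun g => rfl

theorem transMap_transMap (m n p : ℕ) (h1 : m ∣ n) (h2 : n ∣ p) (x : G ⧸ nMul G p) :
    transMap G m n h1 (transMap G n p h2 x) = transMap G m p (h1.trans h2) x := by
  refine QuotientAddGroup.induction_on x fun g => rfl

theorem nsmul_quot_eq_zero (n : ℕ) (x : G ⧸ nMul G n) : n • x = 0 := by
  refine QuotientAddGroup.induction_on x fun g => ?_
  rw [← QuotientAddGroup.mk_nsmul]
  exact (QuotientAddGroup.eq_zero_iff _).2 ⟨g, rfl⟩

theorem finiteQuot (G : Type*) [AddCommGroup G] [AddGroup.FG G] (n : ℕ) (hn : 0 < n) :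
    Finite (G ⧸ nMul G n) := by
  have : AddGroup.FG (G ⧸ nMul G n) := inferInstance
  refine AddCommGroup.finite_of_fg_torsion _ fun x => ?_
  exact isOfFinAddOrder_iff_nsmul_eq_zero.2 ⟨n, hn, nsmul_quot_eq_zero n x⟩

end Aux

section Structure
open DirectSum

theorem int_finsupp_eq_zero_of_nsmul {r : ℕ} {u : Fin r →₀ ℤ} {m : ℕ} (hm : 0 < m)
    (h : m • u = 0) : u = 0 := by
  ext a
  have := DFunLike.congr_fun h a
  simp only [Finsupp.smul_apply, Finsupp.coe_zero, Pi.zero_apply, smul_eq_mul] at this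
  have hm' : (m : ℤ) ≠ 0 := by exact_mod_cast hm.ne'
  simpa [hm', hm.ne'] using this

theorem exists_torsion_exponent (G : Type u) [AddCommGroup G] [AddGroup.FG G] :
    ∃ e : ℕ, 0 < e ∧ ∀ x : G, (∃ m : ℕ, 0 < m ∧ m • x = 0) → e • x = 0 := by
  obtain ⟨r, ι, fι, p, hp, ee, ⟨φ⟩⟩ := AddCommGroup.equiv_free_prod_directSum_zmod G
  haveI : ∀ i, NeZero (p i ^ ee i) := fun i => ⟨pow_ne_zero _ (hp i).ne_zero⟩
  haveI : Finite (⨁ i : ι, ZMod (p i ^ ee i)) :=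
    Finite.of_equiv _ DFinsupp.equivFunOnFintype.symm
  refine ⟨Nat.card (⨁ i : ι, ZMod (p i ^ ee i)), Nat.card_pos, fun x ⟨m, hm, hmx⟩ => ?_⟩
  have h1 : (φ x).1 = 0 := by
    have : m • φ x = 0 := by rw [← map_nsmul, hmx, map_zero]
    exact int_finsupp_eq_zero_of_nsmul hm (congrArg Prod.fst this)
  apply φ.injective
  rw [map_nsmul, map_zero]
  refine Prod.ext_iff.2 ⟨?_, ?_⟩
  · simp [h1]
  · simp

theorem eq_zero_of_forall_mem_nMul (G : Type u) [AddCommGroup G] [AddGroup.FG G] {x : G}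
    (h : ∀ n : ℕ, 0 < n → x ∈ nMul G n) : x = 0 := by
  obtain ⟨r, ι, fι, p, hp, ee, ⟨φ⟩⟩ := AddCommGroup.equiv_free_prod_directSum_zmod G
  haveI : ∀ i, NeZero (p i ^ ee i) := fun i => ⟨pow_ne_zero _ (hp i).ne_zero⟩
  haveI : Finite (⨁ i : ι, ZMod (p i ^ ee i)) :=
    Finite.of_equiv _ DFinsupp.equivFunOnFintype.symm
  set e := Nat.card (⨁ i : ι, ZMod (p i ^ ee i)) with he
  have hepos : 0 < e := Nat.card_pos
  have hfst : (φ x).1 = 0 := by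
    ext a
    set k := ((φ x).1 a).natAbs + 1 with hk
    obtain ⟨y, hy⟩ := h k (Nat.succ_pos _)
    have h1 : (φ x).1 = k • (φ y).1 := by
      have hx : φ x = k • φ y := by rw [← hy]; simp
      rw [hx]; rfl
    have hdvd : (k : ℤ) ∣ (φ x).1 a := by
      refine ⟨(φ y).1 a, ?_⟩
      rw [h1, Finsupp.smul_apply]
      exact nsmul_eq_mul _ _
    have habs : |((φ x).1 a)| < (k : ℤ) := by
      rw [hk, Int.abs_eq_natAbs]
      exact_mod_cast Nat.lt_succ_self _
    simpa using Int.eq_zero_of_abs_lt_dvd hdvd habs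
  have hsnd : (φ x).2 = 0 := by
    obtain ⟨y, hy⟩ := h e hepos
    have h2 : (φ x).2 = e • (φ y).2 := by
      have hx : φ x = e • φ y := by rw [← hy]; simp
      rw [hx]; rfl
    rw [h2, he, card_nsmul_eq_zero']
  apply φ.injective
  rw [map_zero]
  exact Prod.ext hfst hsnd

end Structure

/-- The profinite completion `G∧ = lim_n G/nG`, realized as the subgroup of
`∏ n : ℕ+, G/nG` consisting of compatible families. -/
def PCompletion (G : Type*) [AddCommGroup G] :
    AddSubgroup (∀ n : ℕ+, G ⧸ nMul G (n : ℕ)) where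
  carrier := { f | ∀ (m n : ℕ+) (h : (m : ℕ) ∣ (n : ℕ)), transMap G m n h (f n) = f m }
  add_mem' := by
    intro f g hf hg m n h
    simp only [Pi.add_apply, map_add, hf m n h, hg m n h]
  zero_mem' := by intro m n h; simp
  neg_mem' := by
    intro f hf m n h
    simp only [Pi.neg_apply, map_neg, hf m n h]

/-- The map `G/nG → H/nH` induced by a homomorphism `φ : G → H`. -/
def quotMap {G H : Type*} [AddCommGroup G] [AddCommGroup H] (φ : G →+ H) (n : ℕ) :
    G ⧸ nMul G n →+ H ⧸ nMul H n :=
  QuotientAddGroup.map _ _ φ (by rintro _ ⟨x, rfl⟩; exact ⟨φ x, (map_nsmul φ n x).symm⟩)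

theorem transMap_quotMap {G H : Type*} [AddCommGroup G] [AddCommGroup H] (φ : G →+ H)
    (m n : ℕ) (h : m ∣ n) (x : G ⧸ nMul G n) :
    transMap H m n h (quotMap φ n x) = quotMap φ m (transMap G m n h x) := by
  refine QuotientAddGroup.induction_on x fun g => ?_
  rfl

/-- The homomorphism `G∧ → H∧` induced componentwise by a homomorphism `φ : G → H`. -/
def completionMap {G H : Type*} [AddCommGroup G] [AddCommGroup H] (φ : G →+ H) :
    PCompletion G →+ PCompletion H where
  toFun f := ⟨fun n => quotMap φ n (f.1 n), by
    intro m n h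
    rw [transMap_quotMap, f.2 m n h]⟩
  map_zero' := by ext n; simp
  map_add' f g := by ext n; simp

/-- The natural map `G → G∧` sending `g` to the family of its residues `(g mod nG)ₙ`. -/
def toCompletion (G : Type*) [AddCommGroup G] : G →+ PCompletion G where
  toFun g := ⟨fun n => QuotientAddGroup.mk g, by
    intro m n h
    rfl⟩
  map_zero' := by ext n; simp
  map_add' g g' := by ext n; simp

theorem completionMap_toCompletion {G H : Type*} [AddCommGroup G] [AddCommGroup H]
    (φ : G →+ H) (x : G) :
    completionMap φ (toCompletion G x) = toCompletion H (φ x) := by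
  apply Subtype.ext
  funext n
  simp [completionMap, toCompletion, quotMap]

/-- The map `G∧/G → H∧/H` on cokernels of the natural maps `G → G∧`, `H → H∧`,
induced by a homomorphism `φ : G → H`. -/
def cokerMap {G H : Type*} [AddCommGroup G] [AddCommGroup H] (φ : G →+ H) :
    PCompletion G ⧸ (toCompletion G).range →+ PCompletion H ⧸ (toCompletion H).range :=
  QuotientAddGroup.map _ _ (completionMap φ) (by
    rintro _ ⟨x, rfl⟩
    exact ⟨φ x, (completionMap_toCompletion φ x).symm⟩)

open CategoryTheory Opposite in
theorem exists_section (G : Type u) [AddCommGroup G] [AddGroup.FG G]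
    (S : ∀ n : ℕ+, Set (G ⧸ nMul G (n : ℕ)))
    (hne : ∀ n, (S n).Nonempty)
    (hcomp : ∀ (m n : ℕ+) (h : (m : ℕ) ∣ (n : ℕ)), ∀ x ∈ S n, transMap G m n h x ∈ S m) :
    ∃ a : PCompletion G, ∀ n, a.1 n ∈ S n := by
  classical
  set fa : ℕ → ℕ+ := fun k => ⟨(k + 1).factorial, Nat.factorial_pos _⟩ with hfa
  have hfadvd : ∀ {k l : ℕ}, k ≤ l → ((fa k : ℕ) ∣ (fa l : ℕ)) := by
    intro k l h
    exact Nat.factorial_dvd_factorial (Nat.succ_le_succ h)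
  let F : ℕᵒᵖ ⥤ Type u :=
    { obj := fun k => ↥(S (fa k.unop))
      map := fun {k l} h => TypeCat.ofHom fun x =>
        ⟨transMap G (fa l.unop) (fa k.unop) (hfadvd (leOfHom h.unop)) x.1,
          hcomp _ _ _ _ x.2⟩
      map_id := by
        intro k
        ext x
        exact transMap_self _ _ x.1
      map_comp := by
        intro k l m h1 h2
        ext x
        exact (transMap_transMap _ _ _ _ _ x.1).symm }
  haveI : ∀ k : ℕᵒᵖ, Finite (F.obj k) := by
    intro k
    haveI := finiteQuot G (fa k.unop) (fa k.unop).pos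
    exact Subtype.finite
  haveI : ∀ k : ℕᵒᵖ, Nonempty (F.obj k) := fun k => (hne _).to_subtype
  obtain ⟨s, hs⟩ := nonempty_sections_of_finite_inverse_system F
  -- the value of the section at any index with n ∣ (fa k) is independent of k
  have key : ∀ (n : ℕ+) (k l : ℕ) (hk : (n : ℕ) ∣ (fa k : ℕ)) (hl : (n : ℕ) ∣ (fa l : ℕ)),
      transMap G n (fa k) hk (s (op k)).1 = transMap G n (fa l) hl (s (op l)).1 := by
    intro n k l hk hl
    wlog h : k ≤ l generalizing k l
    · exact (this l k hl hk (le_of_not_ge h)).symm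
    have hkl : (s (op k)).1 = transMap G (fa k) (fa l) (hfadvd h) (s (op l)).1 := by
      have := hs (f := (homOfLE h).op)
      rw [← this]; rfl
    rw [hkl, transMap_transMap]
  have hdvdself : ∀ n : ℕ+, (n : ℕ) ∣ (fa (n : ℕ) : ℕ) := by
    intro n
    exact dvd_trans (Nat.dvd_factorial n.pos le_rfl) (Nat.factorial_dvd_factorial (Nat.le_succ _))
  refine ⟨⟨fun n => transMap G n (fa (n : ℕ)) (hdvdself n) (s (op (n : ℕ))).1, ?_⟩, ?_⟩
  · intro m n h
    rw [transMap_transMap]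
    exact key m (n : ℕ) (m : ℕ) (dvd_trans h (hdvdself n)) (hdvdself m)
  · intro n
    exact hcomp _ _ _ _ (s (op (n : ℕ))).2


section Main
variable {A B C : Type u} [AddCommGroup A] [AddCommGroup B] [AddCommGroup C]

theorem quotMap_mk {G H : Type u} [AddCommGroup G] [AddCommGroup H] (φ : G →+ H) (n : ℕ) (x : G) :
    quotMap φ n (QuotientAddGroup.mk x) = QuotientAddGroup.mk (φ x) := rfl

theorem quotMap_surjective {G H : Type u} [AddCommGroup G] [AddCommGroup H] {φ : G →+ H}
    (hφ : Function.Surjective φ) (n : ℕ) : Function.Surjective (quotMap φ n) := by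
  intro y
  refine QuotientAddGroup.induction_on y fun h => ?_
  obtain ⟨x, rfl⟩ := hφ h
  exact ⟨QuotientAddGroup.mk x, rfl⟩

theorem toCompletion_injective (G : Type u) [AddCommGroup G] [AddGroup.FG G] :
    Function.Injective (toCompletion G) := by
  rw [injective_iff_map_eq_zero]
  intro x hx
  refine eq_zero_of_forall_mem_nMul G fun n hn => ?_
  have h1 : (toCompletion G x).1 ⟨n, hn⟩ = 0 := by rw [hx]; rfl
  exact (QuotientAddGroup.eq_zero_iff _).1 h1

theorem ar {f : A →+ B} {g : B →+ C} (hf : Function.Injective f) (hfg : f.range = g.ker)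
    {e : ℕ} (hepos : 0 < e) (hee : ∀ c : C, (∃ m : ℕ, 0 < m ∧ m • c = 0) → e • c = 0)
    {n : ℕ} (hn : 0 < n) {a : A} {b : B}
    (hab : f a = (n * e) • b) : ∃ a', a = n • a' := by
  have hgb : (n * e) • g b = 0 := by
    rw [← map_nsmul, ← hab]
    exact AddMonoidHom.mem_ker.1 (hfg ▸ AddMonoidHom.mem_range.2 ⟨a, rfl⟩)
  have h1 : e • g b = 0 := hee _ ⟨n * e, Nat.mul_pos hn hepos, hgb⟩
  have h2 : e • b ∈ g.ker := by rw [AddMonoidHom.mem_ker, map_nsmul]; exact h1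
  rw [← hfg] at h2
  obtain ⟨a'', ha''⟩ := h2
  refine ⟨a'', hf ?_⟩
  rw [map_nsmul, ha'', hab, mul_smul]

theorem completionMap_inj {f : A →+ B} {g : B →+ C} [AddGroup.FG C]
    (hf : Function.Injective f) (hfg : f.range = g.ker) :
    Function.Injective (completionMap f) := by
  obtain ⟨e, hepos, hee⟩ := exists_torsion_exponent C
  rw [injective_iff_map_eq_zero]
  intro x hx
  apply Subtype.ext
  funext n
  have hx' : ∀ m : ℕ+, quotMap f m (x.1 m) = 0 :=
    fun m => congrArg (fun z : PCompletion B => z.1 m) hx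
  set N : ℕ+ := n * ⟨e, hepos⟩ with hN
  obtain ⟨α, hα⟩ := QuotientAddGroup.mk_surjective (x.1 N)
  have h1 : f α ∈ nMul B (N : ℕ) := by
    rw [← QuotientAddGroup.eq_zero_iff, ← quotMap_mk f, hα, hx']
  obtain ⟨b, hb⟩ := h1
  have hab : f α = ((n : ℕ) * e) • b := hb.symm
  obtain ⟨a', ha'⟩ := ar hf hfg hepos hee n.pos hab
  have hdvd : (n : ℕ) ∣ (N : ℕ) := ⟨e, rfl⟩
  rw [← x.2 n N hdvd, ← hα, transMap_mk]
  exact (QuotientAddGroup.eq_zero_iff _).2 ⟨a', ha'.symm⟩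

theorem completionMap_comp_eq_zero {f : A →+ B} {g : B →+ C} (hfg : ∀ a, g (f a) = 0)
    (x : PCompletion A) : completionMap g (completionMap f x) = 0 := by
  apply Subtype.ext
  funext n
  show quotMap g n (quotMap f n (x.1 n)) = 0
  refine QuotientAddGroup.induction_on (x.1 n) fun a => ?_
  rw [quotMap_mk, quotMap_mk, hfg]
  rfl

end Main


/--
Let `0 → A → B → C → 0` be a short exact sequence of finitely generated
abelian groups. Then the natural map `G → G∧` is injective for every finitely generated
abelian group `G`, and the induced sequence of cokernels `0 → A∧/A → B∧/B → C∧/C → 0`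
is exact: `A∧/A → B∧/B` is injective, `B∧/B → C∧/C` is surjective, and the kernel of
`B∧/B → C∧/C` equals the image of `A∧/A → B∧/B`.
-/
theorem stmt_2 {A B C : Type u} [AddCommGroup A] [AddCommGroup B] [AddCommGroup C]
    [AddGroup.FG A] [AddGroup.FG B] [AddGroup.FG C]
    (f : A →+ B) (g : B →+ C)
    (hf : Function.Injective f) (hg : Function.Surjective g)
    (hfg : f.range = g.ker) :
    (∀ (G : Type u) [AddCommGroup G] [AddGroup.FG G],
        Function.Injective (toCompletion G)) ∧
      Function.Injective (cokerMap f) ∧ Function.Surjective (cokerMap g) ∧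
        (cokerMap f).range = (cokerMap g).ker := by
  have hgf : ∀ a : A, g (f a) = 0 :=
    fun a => AddMonoidHom.mem_ker.1 (hfg ▸ AddMonoidHom.mem_range.2 ⟨a, rfl⟩)
  refine ⟨fun G _ _ => toCompletion_injective G, ?_, ?_, ?_⟩
  · -- injectivity of cokerMap f
    rw [injective_iff_map_eq_zero]
    intro x hx
    obtain ⟨a, rfl⟩ := QuotientAddGroup.mk_surjective x
    have h0 : QuotientAddGroup.mk (completionMap f a)
        = (0 : PCompletion B ⧸ (toCompletion B).range) := hx
    obtain ⟨b, hb⟩ := (QuotientAddGroup.eq_zero_iff _).1 h0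
    have hgb : toCompletion C (g b) = 0 := by
      rw [← completionMap_toCompletion g b, hb, completionMap_comp_eq_zero hgf]
    have hb0 : g b = 0 := by
      apply toCompletion_injective C
      rw [hgb, map_zero]
    obtain ⟨a₀, rfl⟩ := AddMonoidHom.mem_range.1 (hfg ▸ AddMonoidHom.mem_ker.2 hb0)
    have : a = toCompletion A a₀ := by
      apply completionMap_inj hf hfg
      rw [← hb, completionMap_toCompletion]
    rw [this]
    exact (QuotientAddGroup.eq_zero_iff _).2 ⟨a₀, rfl⟩
  · -- surjectivity of cokerMap g
    have hsurj : Function.Surjective (completionMap g) := by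
      intro y
      obtain ⟨a, ha⟩ := exists_section B (fun n => quotMap g n ⁻¹' {y.1 n})
        (fun n => quotMap_surjective hg (n : ℕ) (y.1 n))
        (by
          intro m n h x hx
          simp only [Set.mem_preimage, Set.mem_singleton_iff] at hx ⊢
          rw [← transMap_quotMap, hx, y.2 m n h])
      exact ⟨a, Subtype.ext (funext fun n => ha n)⟩
    intro z
    obtain ⟨yc, rfl⟩ := QuotientAddGroup.mk_surjective z
    obtain ⟨b, hb⟩ := hsurj yc
    exact ⟨QuotientAddGroup.mk b, congrArg QuotientAddGroup.mk hb⟩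
  · -- exactness in the middle
    ext z
    simp only [AddMonoidHom.mem_range, AddMonoidHom.mem_ker]
    constructor
    · rintro ⟨w, rfl⟩
      obtain ⟨a, rfl⟩ := QuotientAddGroup.mk_surjective w
      show QuotientAddGroup.mk (completionMap g (completionMap f a))
          = (0 : PCompletion C ⧸ (toCompletion C).range)
      rw [completionMap_comp_eq_zero hgf]
      rfl
    · intro hz
      obtain ⟨b, rfl⟩ := QuotientAddGroup.mk_surjective z
      have h0 : QuotientAddGroup.mk (completionMap g b)
          = (0 : PCompletion C ⧸ (toCompletion C).range) := hz
      obtain ⟨c, hc⟩ := (QuotientAddGroup.eq_zero_iff _).1 h0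
      obtain ⟨b₀, rfl⟩ := hg c
      set b' : PCompletion B := b - toCompletion B b₀ with hb'
      have hgb' : completionMap g b' = 0 := by
        rw [hb', map_sub, completionMap_toCompletion, hc, sub_self]
      have hne : ∀ n : ℕ+, ((fun n : ℕ+ => quotMap f (n : ℕ) ⁻¹' {b'.1 n}) n).Nonempty := by
        intro n
        obtain ⟨β, hβ⟩ := QuotientAddGroup.mk_surjective (b'.1 n)
        have hq : quotMap g (n : ℕ) (b'.1 n) = 0 :=
          congrArg (fun z : PCompletion C => z.1 n) hgb'
        rw [← hβ, quotMap_mk] at hq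
        obtain ⟨c₁, hc₁⟩ := (QuotientAddGroup.eq_zero_iff _).1 hq
        obtain ⟨b₁, rfl⟩ := hg c₁
        have hker : β - (n : ℕ) • b₁ ∈ g.ker := by
          rw [AddMonoidHom.mem_ker, map_sub, map_nsmul]
          exact sub_eq_zero.2 hc₁.symm
        obtain ⟨α, hα⟩ := AddMonoidHom.mem_range.1 (hfg ▸ hker)
        refine ⟨QuotientAddGroup.mk α, ?_⟩
        simp only [Set.mem_preimage, Set.mem_singleton_iff]
        rw [quotMap_mk, hα, ← hβ]
        rw [QuotientAddGroup.eq_iff_sub_mem]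
        refine ⟨-b₁, ?_⟩
        show (n : ℕ) • (-b₁) = β - (n : ℕ) • b₁ - β
        rw [smul_neg]
        abel
      obtain ⟨a, ha⟩ := exists_section A (fun n => quotMap f (n : ℕ) ⁻¹' {b'.1 n}) hne
        (by
          intro m n h x hx
          simp only [Set.mem_preimage, Set.mem_singleton_iff] at hx ⊢
          rw [← transMap_quotMap, hx, b'.2 m n h])
      have hfa : completionMap f a = b' := Subtype.ext (funext fun n => ha n)
      refine ⟨QuotientAddGroup.mk a, ?_⟩
      show QuotientAddGroup.mk (completionMap f a)
          = (QuotientAddGroup.mk b : PCompletion B ⧸ (toCompletion B).range)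
      rw [hfa, hb', QuotientAddGroup.eq_iff_sub_mem]
      have heq : (b - toCompletion B b₀) - b = - toCompletion B b₀ := by abel
      rw [heq]
      exact AddSubgroup.neg_mem _ ⟨b₀, rfl⟩
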